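/- The total surface area of the oloid obtained by integrating the surface area element over both sheets equals 4π: 2·∫₀¹ ∫_{−2π/3}^{2π/3} ‖(∂P/∂m) × (∂P/∂t)‖ dt dm = 4π, where P(m,t) = (−1/2 + m/(cos t + 1) + (m−1)cos t, (1−m)sin t, m√(2cos t + 1)/(cos t + 1)). -/

import Mathlib

open Real Matrix

/-- Parametrization of the upper sheet of the oloid surface. -/
noncomputable def oloidP (m t : ℝ) : Fin 3 → ℝ :=
  ![-1/2 + m / (Real.cos t + 1) + (m - 1) * Real.cos t,
    (1 - m) * Real.sin t,
    m * Real.sqrt (2 * Real.cos t + 1) / (Real.cos t + 1)]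

/-- Euclidean norm of a vector in `Fin 3 → ℝ`. -/
noncomputable def euclNorm (v : Fin 3 → ℝ) : ℝ :=
  ‖((WithLp.equiv 2 (Fin 3 → ℝ)).symm v : EuclideanSpace ℝ (Fin 3))‖

noncomputable def oloidf (m t : ℝ) : ℝ :=
  Real.sqrt 2 * (2*Real.cos t + 1 - 3*m*Real.cos t) / Real.sqrt ((Real.cos t + 1)*(2*Real.cos t + 1))

noncomputable def oloidF (m t : ℝ) : ℝ :=
  (4 - 6*m) * Real.arcsin (2 * Real.sin (t/2) / Real.sqrt 3)
  + (6*m - 2) * Real.arcsin (Real.tan (t/2) / Real.sqrt 3)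

lemma cos_half_gt (t : ℝ) (h1 : -(2*π/3) < t) (h2 : t < 2*π/3) : 1/2 < Real.cos (t/2) := by
  have h3 : Real.cos (2*π/3/2) < Real.cos (|t/2|) ∨ t = 0 := by
    rcases eq_or_ne t 0 with h | h
    · right; exact h
    · left
      apply Real.cos_lt_cos_of_nonneg_of_le_pi (abs_nonneg _)
      · nlinarith [Real.pi_pos]
      · rw [abs_lt]; constructor <;> nlinarith
  rcases h3 with h3 | h3
  · rw [Real.cos_abs] at h3
    have : (2*π/3/2) = π/3 := by ring
    rw [this, Real.cos_pi_div_three] at h3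
    linarith
  · simp [h3]; norm_num

lemma oloidF_hasDerivAt (m t : ℝ) (h1 : -(2*π/3) < t) (h2 : t < 2*π/3) :
    HasDerivAt (oloidF m) (oloidf m t) t := by
  have hcu : 1/2 < Real.cos (t/2) := cos_half_gt t h1 h2
  set cu := Real.cos (t/2) with hcu_def
  have hcu0 : cu ≠ 0 := by positivity
  have hsu : Real.sin (t/2)^2 = 1 - cu^2 := Real.sin_sq _
  have h3 : Real.sqrt 3 > 0 := by positivity
  have hsq3 : Real.sqrt 3 ^ 2 = 3 := Real.sq_sqrt (by norm_num)
  have hw : (0:ℝ) < 4*cu^2 - 1 := by nlinarith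
  set w := Real.sqrt (4*cu^2 - 1) with hw_def
  have hwpos : 0 < w := Real.sqrt_pos.2 hw
  have hw2 : w^2 = 4*cu^2-1 := Real.sq_sqrt hw.le
  -- argument bounds
  have hx1 : (2 * Real.sin (t/2) / Real.sqrt 3)^2 < 1 := by
    rw [div_pow, hsq3]; nlinarith
  have hy1 : (Real.tan (t/2) / Real.sqrt 3)^2 < 1 := by
    rw [Real.tan_eq_sin_div_cos, div_pow, div_pow, hsq3, div_div]
    rw [div_lt_one (by positivity)]
    nlinarith
  -- derivative of first arcsin term
  have d1 : HasDerivAt (fun t => 2 * Real.sin (t/2) / Real.sqrt 3)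
      (2 * (Real.cos (t/2) * (1/2)) / Real.sqrt 3) t := by
    exact (((Real.hasDerivAt_sin (t/2)).comp t ((hasDerivAt_id t).div_const 2)).const_mul 2).div_const _
  have a1 : HasDerivAt (fun x => Real.arcsin (2 * Real.sin (x/2) / Real.sqrt 3))
      ((1 / Real.sqrt (1 - (2 * Real.sin (t/2) / Real.sqrt 3)^2)) * (2 * (Real.cos (t/2) * (1/2)) / Real.sqrt 3)) t := by
    refine (Real.hasDerivAt_arcsin ?_ ?_).comp t d1
    · intro h; rw [h] at hx1; norm_num at hx1
    · intro h; rw [h] at hx1; norm_num at hx1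
  -- derivative of tan term
  have d2 : HasDerivAt (fun t => Real.tan (t/2) / Real.sqrt 3)
      ((1 / Real.cos (t/2)^2 * (1/2)) / Real.sqrt 3) t := by
    exact ((Real.hasDerivAt_tan hcu0).comp t ((hasDerivAt_id t).div_const 2)).div_const _
  have a2 : HasDerivAt (fun x => Real.arcsin (Real.tan (x/2) / Real.sqrt 3))
      ((1 / Real.sqrt (1 - (Real.tan (t/2) / Real.sqrt 3)^2)) * ((1 / Real.cos (t/2)^2 * (1/2)) / Real.sqrt 3)) t := by
    refine (Real.hasDerivAt_arcsin ?_ ?_).comp t d2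
    · intro h; rw [h] at hy1; norm_num at hy1
    · intro h; rw [h] at hy1; norm_num at hy1
  have key := ((a1.const_mul (4-6*m)).add (a2.const_mul (6*m-2)))
  convert key using 1
  · rfl
  · rfl
  · rfl
  -- now algebra
  have e1 : Real.sqrt (1 - (2 * Real.sin (t/2) / Real.sqrt 3)^2) = w / Real.sqrt 3 := by
    have : 1 - (2 * Real.sin (t/2) / Real.sqrt 3)^2 = (4*cu^2-1)/3 := by
      rw [div_pow, hsq3]
      nlinarith [hsu]
    rw [this, hw_def, Real.sqrt_div hw.le]
  have e2 : Real.sqrt (1 - (Real.tan (t/2) / Real.sqrt 3)^2) = w / (Real.sqrt 3 * cu) := by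
    have hcup : (0:ℝ) < cu := by linarith
    have : 1 - (Real.tan (t/2) / Real.sqrt 3)^2 = (4*cu^2-1)/(3*cu^2) := by
      rw [Real.tan_eq_sin_div_cos, div_pow, div_pow, hsq3]
      rw [div_div, hsu, ← hcu_def]
      field_simp
      ring
    rw [this, hw_def, Real.sqrt_div hw.le, Real.sqrt_mul (by norm_num : (0:ℝ) ≤ 3), Real.sqrt_sq hcup.le]
  rw [e1, e2]
  have hct : Real.cos t = 2*cu^2 - 1 := by
    have h2t : 2 * (t/2) = t := by ring
    rw [hcu_def, ← Real.cos_two_mul, h2t]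
  have hsq2 : Real.sqrt 2 ^ 2 = 2 := Real.sq_sqrt (by norm_num)
  have h2p : (0:ℝ) < Real.sqrt 2 := by positivity
  have hcup : (0:ℝ) < cu := by linarith
  have hD : Real.sqrt ((Real.cos t + 1)*(2*Real.cos t + 1)) = Real.sqrt 2 * (cu * w) := by
    have : (Real.cos t + 1)*(2*Real.cos t + 1) = (Real.sqrt 2 * (cu * w))^2 := by
      rw [hct, mul_pow, mul_pow, hsq2, hw2]; ring
    rw [this, Real.sqrt_sq (by positivity)]
  rw [oloidf, hD, hct]
  rw [show Real.sqrt 2 * (2*(2*cu^2-1) + 1 - 3*m*(2*cu^2-1)) = Real.sqrt 2 * ((2*(2*cu^2-1) + 1 - 3*m*(2*cu^2-1))) from rfl,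
     mul_div_mul_left _ _ h2p.ne']
  rw [← hcu_def]
  field_simp
  ring

lemma cos_half_ge (t : ℝ) (h1 : -(2*π/3) ≤ t) (h2 : t ≤ 2*π/3) : 1/2 ≤ Real.cos (t/2) := by
  have h3 : Real.cos (π/3) ≤ Real.cos (|t/2|) := by
    apply Real.cos_le_cos_of_nonneg_of_le_pi (abs_nonneg _)
    · nlinarith [Real.pi_pos]
    · rw [abs_le]; constructor <;> nlinarith
  rw [Real.cos_abs, Real.cos_pi_div_three] at h3
  exact h3

lemma oloidf_nonneg (m t : ℝ) (hm0 : 0 ≤ m) (hm1 : m ≤ 1)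
    (h1 : -(2*π/3) < t) (h2 : t < 2*π/3) : 0 ≤ oloidf m t := by
  have hcu : 1/2 < Real.cos (t/2) := cos_half_gt t h1 h2
  have hct : Real.cos t = 2*Real.cos (t/2)^2 - 1 := by
    have h2t : 2 * (t/2) = t := by ring
    rw [← Real.cos_two_mul, h2t]
  have hc1 : Real.cos t ≤ 1 := Real.cos_le_one t
  have hc2 : -(1/2) < Real.cos t := by
    rw [hct]; nlinarith
  apply div_nonneg _ (Real.sqrt_nonneg _)
  apply mul_nonneg (Real.sqrt_nonneg _)
  nlinarith

lemma oloid_inner (m : ℝ) (hm0 : 0 ≤ m) (hm1 : m ≤ 1) :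
    ∫ t in (-(2*π/3))..(2*π/3), oloidf m t = 2*π := by
  have hpi := Real.pi_pos
  have hab : -(2*π/3) ≤ 2*π/3 := by linarith
  have hcont : ContinuousOn (oloidF m) (Set.Icc (-(2*π/3)) (2*π/3)) := by
    apply ContinuousOn.add
    · apply Continuous.continuousOn
      exact continuous_const.mul (Real.continuous_arcsin.comp
        (((continuous_const.mul (Real.continuous_sin.comp (continuous_id.div_const 2)))).div_const _))
    · apply ContinuousOn.mul continuousOn_const
      apply Real.continuous_arcsin.comp_continuousOn
      apply ContinuousOn.div_const
      intro x hx
      apply ContinuousAt.continuousWithinAt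
      have hcx : Real.cos (x/2) ≠ 0 := by
        have := cos_half_ge x hx.1 hx.2; linarith
      have : ContinuousAt (fun y : ℝ => Real.tan (y/2)) x :=
        ContinuousAt.comp (x := x) (g := Real.tan) (f := fun y : ℝ => y/2)
          (Real.continuousAt_tan.2 hcx) (continuousAt_id.div_const 2)
      exact this
  have hderiv : ∀ x ∈ Set.Ioo (-(2*π/3)) (2*π/3), HasDerivWithinAt (oloidF m) (oloidf m x) (Set.Ioi x) x :=
    fun x hx => (oloidF_hasDerivAt m x hx.1 hx.2).hasDerivWithinAt
  have hnonneg : ∀ x ∈ Set.Ioo (-(2*π/3)) (2*π/3), 0 ≤ oloidf m x :=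
    fun x hx => oloidf_nonneg m x hm0 hm1 hx.1 hx.2
  have hint : IntervalIntegrable (oloidf m) MeasureTheory.volume (-(2*π/3)) (2*π/3) := by
    apply intervalIntegral.intervalIntegrable_deriv_of_nonneg
    · rwa [Set.uIcc_of_le hab]
    · rw [min_eq_left hab, max_eq_right hab]
      exact fun x hx => (oloidF_hasDerivAt m x hx.1 hx.2)
    · rw [min_eq_left hab, max_eq_right hab]
      exact hnonneg
  rw [intervalIntegral.integral_eq_sub_of_hasDeriv_right_of_le hab hcont hderiv hint]
  have h3 : Real.sqrt 3 ≠ 0 := by positivity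
  have hb : oloidF m (2*π/3) = π := by
    rw [oloidF]
    have e1 : (2*π/3)/2 = π/3 := by ring
    rw [e1, Real.sin_pi_div_three, Real.tan_pi_div_three]
    rw [show 2 * (Real.sqrt 3/2) / Real.sqrt 3 = Real.sqrt 3 / Real.sqrt 3 by ring, div_self h3,
      Real.arcsin_one]
    ring
  have ha : oloidF m (-(2*π/3)) = -π := by
    rw [oloidF]
    have e1 : (-(2*π/3))/2 = -(π/3) := by ring
    rw [e1, Real.sin_neg, Real.tan_neg, Real.sin_pi_div_three, Real.tan_pi_div_three]
    rw [show 2 * -(Real.sqrt 3/2) / Real.sqrt 3 = -(Real.sqrt 3 / Real.sqrt 3) by ring,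
      show -Real.sqrt 3 / Real.sqrt 3 = -(Real.sqrt 3 / Real.sqrt 3) by ring, div_self h3,
      Real.arcsin_neg, Real.arcsin_one]
    ring
  rw [hb, ha]; ring

lemma euclNorm_eq (v : Fin 3 → ℝ) : euclNorm v = Real.sqrt (v 0^2 + v 1^2 + v 2^2) := by
  rw [euclNorm, EuclideanSpace.norm_eq]
  simp [WithLp.equiv_symm_apply, PiLp.toLp_apply, Real.norm_eq_abs, sq_abs, Fin.sum_univ_three]

lemma oloid_deriv_m (m t : ℝ) (hq : Real.cos t + 1 ≠ 0) :
    HasDerivAt (fun m' => oloidP m' t)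
      ![1/(Real.cos t+1) + Real.cos t, -Real.sin t, Real.sqrt (2*Real.cos t+1)/(Real.cos t+1)] m := by
  rw [hasDerivAt_pi]
  intro i
  fin_cases i
  · simp only [oloidP, Matrix.cons_val_zero, Fin.zero_eta, Fin.isValue]
    have := (((hasDerivAt_id m).div_const (Real.cos t+1)).const_add (-1/2:ℝ)).add
      (((hasDerivAt_id m).sub_const 1).mul_const (Real.cos t))
    convert this using 1
    · rfl
    ring
  · simp only [oloidP, Matrix.cons_val_one, Matrix.head_cons, Fin.mk_one, Fin.isValue, Matrix.cons_val_zero]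
    have := ((hasDerivAt_id m).const_sub 1).mul_const (Real.sin t)
    exact this.congr_deriv (by ring)
  · simp only [oloidP]
    have := ((hasDerivAt_id m).mul_const (Real.sqrt (2*Real.cos t+1))).div_const (Real.cos t+1)
    exact this.congr_deriv (by rw [one_mul]; rfl)

lemma oloid_deriv_t (m t : ℝ) (hq : (0:ℝ) < Real.cos t + 1) (hr : (0:ℝ) < 2*Real.cos t + 1) :
    HasDerivAt (fun t' => oloidP m t')
      ![m*Real.sin t/(Real.cos t+1)^2 + (1-m)*Real.sin t,
        (1-m)*Real.cos t,
        m*Real.sin t*Real.cos t/(Real.sqrt (2*Real.cos t+1)*(Real.cos t+1)^2)] t := by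
  have hrp : (0:ℝ) < Real.sqrt (2*Real.cos t+1) := Real.sqrt_pos.2 hr
  have hr2 : Real.sqrt (2*Real.cos t+1)^2 = 2*Real.cos t+1 := Real.sq_sqrt hr.le
  rw [hasDerivAt_pi]
  intro i
  fin_cases i
  · simp only [oloidP, Matrix.cons_val_zero, Fin.zero_eta, Fin.isValue]
    have hdiv : HasDerivAt (fun t' => m / (Real.cos t' + 1))
        ((0 * (Real.cos t + 1) - m * (-Real.sin t)) / (Real.cos t + 1)^2) t :=
      (hasDerivAt_const t m).div ((Real.hasDerivAt_cos t).add_const 1) hq.ne'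
    have := ((hdiv.const_add (-1/2:ℝ)).add ((Real.hasDerivAt_cos t).const_mul (m-1)))
    exact this.congr_deriv (by ring)
  · simp only [oloidP, Matrix.cons_val_one, Matrix.head_cons, Fin.mk_one, Fin.isValue, Matrix.cons_val_zero]
    exact (Real.hasDerivAt_sin t).const_mul (1-m)
  · simp only [oloidP]
    have hin : HasDerivAt (fun t' => 2*Real.cos t'+1) (2*(-Real.sin t)) t :=
      ((Real.hasDerivAt_cos t).const_mul 2).add_const 1
    have hs := hin.sqrt hr.ne'
    have := (hs.const_mul m).div ((Real.hasDerivAt_cos t).add_const 1) hq.ne'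
    refine this.congr_deriv ?_
    show _ = m*Real.sin t*Real.cos t/(Real.sqrt (2*Real.cos t+1)*(Real.cos t+1)^2)
    field_simp
    linear_combination (m*Real.sin t) * hr2

set_option maxHeartbeats 2000000 in
lemma oloid_integrand_eq (m t : ℝ) (hm0 : 0 ≤ m) (hm1 : m ≤ 1)
    (h1 : -(2*π/3) < t) (h2 : t < 2*π/3) :
    euclNorm ((deriv (fun m' => oloidP m' t) m) ⨯₃ (deriv (fun t' => oloidP m t') t)) = oloidf m t := by
  have hcu : 1/2 < Real.cos (t/2) := cos_half_gt t h1 h2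
  have hct : Real.cos t = 2*Real.cos (t/2)^2 - 1 := by
    have h2t : 2 * (t/2) = t := by ring
    rw [← Real.cos_two_mul, h2t]
  have hc1 : Real.cos t ≤ 1 := Real.cos_le_one t
  have hc2 : -(1/2) < Real.cos t := by rw [hct]; nlinarith
  have hq : (0:ℝ) < Real.cos t + 1 := by linarith
  have hr : (0:ℝ) < 2*Real.cos t + 1 := by linarith
  have hrp : (0:ℝ) < Real.sqrt (2*Real.cos t+1) := Real.sqrt_pos.2 (by linarith)
  have hr2 : Real.sqrt (2*Real.cos t+1)^2 = 2*Real.cos t+1 := Real.sq_sqrt (by linarith)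
  have hs2 : Real.sin t^2 = 1 - Real.cos t^2 := Real.sin_sq t
  rw [(oloid_deriv_m m t hq.ne').deriv, (oloid_deriv_t m t hq hr).deriv, cross_apply, euclNorm_eq]
  simp only [Matrix.cons_val_zero, Matrix.cons_val_one, Matrix.head_cons, Matrix.cons_val_two,
    Matrix.tail_cons]
  set c := Real.cos t
  set s := Real.sin t
  set r := Real.sqrt (2*c+1) with hrdef
  have hN : 0 ≤ 2*c + 1 - 3*m*c := by nlinarith
  have hX0 : -s * (m*s*c/(r*(c+1)^2)) - r/(c+1) * ((1-m)*c)
      = r * (-(m*(1-c^2)*c) - (1-m)*c*(2*c+1)*(c+1)) / ((2*c+1)*(c+1)^2) := by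
    field_simp [hr.ne', hrp.ne', hq.ne']
    rw [eq_div_iff (by linarith : (0:ℝ) < c*2+1).ne']
    linear_combination (-c*m*(2*c+1)) * hs2 + (c*m*(1-c^2)) * hr2
  have hX1 : r/(c+1) * (m*s/(c+1)^2 + (1-m)*s) - (1/(c+1)+c) * (m*s*c/(r*(c+1)^2))
      = r * (s * ((m + (1-m)*(c+1)^2)*(2*c+1) - (1+c*(c+1))*m*c)) / ((2*c+1)*(c+1)^3) := by
    field_simp [hr.ne', hrp.ne', hq.ne']
    rw [eq_div_iff (by linarith : (0:ℝ) < c*2+1).ne']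
    linear_combination (s*c*m*(1+c*(c+1))) * hr2
  have hX2 : (1/(c+1)+c) * ((1-m)*c) - (-s) * (m*s/(c+1)^2 + (1-m)*s)
      = ((1+c*(c+1))*(1-m)*c*(c+1) + (1-c^2)*(m + (1-m)*(c+1)^2)) / (c+1)^2 := by
    field_simp [hr.ne', hrp.ne', hq.ne']
    linear_combination (m+(c+1)^2*(1-m)) * hs2
  have hkey : (-s * (m*s*c/(r*(c+1)^2)) - r/(c+1) * ((1-m)*c))^2
      + (r/(c+1) * (m*s/(c+1)^2 + (1-m)*s) - (1/(c+1)+c) * (m*s*c/(r*(c+1)^2)))^2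
      + ((1/(c+1)+c) * ((1-m)*c) - (-s) * (m*s/(c+1)^2 + (1-m)*s))^2
      = 2*(2*c+1-3*m*c)^2 / ((c+1)*(2*c+1)) := by
    rw [hX0, hX1, hX2]
    simp only [div_pow, mul_pow]
    rw [hr2, hs2]
    field_simp
    ring
  rw [hkey]
  rw [oloidf, Real.sqrt_div (by positivity), Real.sqrt_mul (by norm_num : (0:ℝ) ≤ 2),
    Real.sqrt_sq hN]

theorem oloid_surface_area :
    2 * ∫ m in (0:ℝ)..1, ∫ t in (-(2*π/3))..(2*π/3),
        euclNorm ((deriv (fun m' => oloidP m' t) m) ⨯₃ (deriv (fun t' => oloidP m t') t)) =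
      4 * π := by
  have hpi := Real.pi_pos
  have hab : -(2*π/3) ≤ 2*π/3 := by linarith
  have hinner : ∀ m ∈ Set.Icc (0:ℝ) 1,
      (∫ t in (-(2*π/3))..(2*π/3),
        euclNorm ((deriv (fun m' => oloidP m' t) m) ⨯₃ (deriv (fun t' => oloidP m t') t)))
      = 2*π := by
    intro m hm
    rw [intervalIntegral.integral_congr_ae (g := oloidf m) ?_]
    · exact oloid_inner m hm.1 hm.2
    · have h0 : (MeasureTheory.volume : MeasureTheory.Measure ℝ) {(2*π/3)} = 0 :=
        MeasureTheory.measure_singleton _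
      filter_upwards [MeasureTheory.compl_mem_ae_iff.2 h0] with t ht htIoc
      rw [Set.uIoc_of_le hab] at htIoc
      have htne : t ≠ 2*π/3 := by simpa using ht
      exact oloid_integrand_eq m t hm.1 hm.2 htIoc.1 (lt_of_le_of_ne htIoc.2 htne)
  rw [intervalIntegral.integral_congr (g := fun _ => (2*π : ℝ))
      (fun m hm => hinner m (by rwa [Set.uIcc_of_le zero_le_one] at hm))]
  rw [intervalIntegral.integral_const]
  simp
  ring
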